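/- Let E be a strongly archimedean convex SEA with property A which is spectral (with respect to its canonical compression base), let a∈E and let a^k=a∘⋯∘a denote the k-fold sequential power. Then (a^k)_{k∈ℕ} is a descending sequence of mutually commuting elements, the infimum ⋀_k a^k exists, and it equals the floor a_∘ of a. -/

import Mathlib

universe u

/-- An effect algebra: the partially defined sum `⊕` is encoded via `Option`. -/
class EffectAlgebra (E : Type u) where
  oplus : E → E → Option E
  zero : E
  one : E
  oplus_comm : ∀ a b : E, oplus a b = oplus b a
  oplus_assoc : ∀ {a b c ab abc : E}, oplus a b = some ab → oplus ab c = some abc →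
    ∃ bc : E, oplus b c = some bc ∧ oplus a bc = some abc
  exists_perp : ∀ a : E, ∃ b : E, oplus a b = some one
  perp_unique : ∀ {a b c : E}, oplus a b = some one → oplus a c = some one → b = c
  oplus_one : ∀ {a b : E}, oplus a one = some b → a = zero

namespace EffectAlgebra

variable {E : Type u} [EffectAlgebra E]

/-- The orthosupplement `a^⊥`. -/
noncomputable def perp (a : E) : E := Classical.choose (exists_perp a)

/-- The partial order: `a ≤ b` iff `a ⊕ c = b` for some `c`. -/
def le (a b : E) : Prop := ∃ c : E, oplus a c = some b

/-- Sharp elements. -/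
def Sharp (a : E) : Prop := ∀ x : E, le x a → le x (perp a) → x = zero

/-- Finite orthosums of lists of elements. -/
def osum : List E → Option E
  | [] => some zero
  | a :: l => (osum l).bind fun s => oplus a s

/-- Mackey compatibility `a ↔ b`. -/
def MCompat (a b : E) : Prop :=
  ∃ a₁ b₁ c s t : E, oplus a₁ b₁ = some s ∧ oplus s c = some t ∧
    oplus a₁ c = some a ∧ oplus b₁ c = some b

/-- `a` is the supremum of the sequence `f`. -/
def IsSupSeq (f : ℕ → E) (a : E) : Prop :=
  (∀ n, le (f n) a) ∧ ∀ b : E, (∀ n, le (f n) b) → le a b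

/-- `a` is the infimum of the sequence `f`. -/
def IsInfSeq (f : ℕ → E) (a : E) : Prop :=
  (∀ n, le a (f n)) ∧ ∀ b : E, (∀ n, le b (f n)) → le b a

/-- `a` is the infimum of the set `S`. -/
def IsInfSet (S : Set E) (a : E) : Prop :=
  (∀ x ∈ S, le a x) ∧ ∀ b : E, (∀ x ∈ S, le b x) → le b a

/-- `a` is the supremum of `f` computed inside the subset `S`. -/
def IsSupSeqIn (S : Set E) (f : ℕ → E) (a : E) : Prop :=
  a ∈ S ∧ (∀ n, le (f n) a) ∧ ∀ b ∈ S, (∀ n, le (f n) b) → le a b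

variable (E) in
/-- Monotone σ-completeness: every ascending sequence has a supremum. -/
def MonotoneSigmaComplete : Prop :=
  ∀ f : ℕ → E, (∀ n, le (f n) (f (n + 1))) → ∃ a : E, IsSupSeq f a

end EffectAlgebra

open EffectAlgebra in
/-- A compression base `(J_p)_{p ∈ P}` on an effect algebra. -/
structure CompressionBase (E : Type u) [EffectAlgebra E] where
  P : Set E
  J : E → E → E
  zero_mem : zero ∈ P
  one_mem : one ∈ P
  perp_mem : ∀ p ∈ P, perp p ∈ P
  oplus_mem : ∀ p ∈ P, ∀ q ∈ P, ∀ r : E, oplus p q = some r → r ∈ P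
  normal : ∀ e f d s t x y : E, oplus e f = some s → oplus s d = some t →
    oplus e d = some x → x ∈ P → oplus f d = some y → y ∈ P → d ∈ P
  additive : ∀ p ∈ P, ∀ a b c : E, oplus a b = some c →
    oplus (J p a) (J p b) = some (J p c)
  retraction : ∀ p ∈ P, ∀ a : E, le a p → J p a = a
  focus : ∀ p ∈ P, J p one = p
  compression : ∀ p ∈ P, ∀ a : E, (J p a = zero ↔ le a (perp p))
  compose : ∀ p ∈ P, ∀ q ∈ P, ∀ r ∈ P, ∀ s t qr : E,
    oplus p q = some s → oplus s r = some t → oplus q r = some qr →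
    ∀ a : E, J s (J qr a) = J q a

namespace CompressionBase

open EffectAlgebra

variable {E : Type u} [EffectAlgebra E] (cb : CompressionBase E)

/-- The commutant `C(p)` of a projection `p`. -/
noncomputable def Cset (p : E) : Set E :=
  {a : E | oplus (cb.J p a) (cb.J (perp p) a) = some a}

/-- `PC(a)`: projections compatible with `a`. -/
noncomputable def PC (a : E) : Set E := {p : E | p ∈ cb.P ∧ a ∈ cb.Cset p}

/-- The P-bicommutant `P(a) = PC(PC(a) ∪ {a})`. -/
noncomputable def Pbicomm (a : E) : Set E :=
  {p : E | p ∈ cb.P ∧ a ∈ cb.Cset p ∧ ∀ q ∈ cb.PC a, q ∈ cb.Cset p}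

/-- `p` is the projection cover of `a`. -/
def IsProjCover (a p : E) : Prop :=
  p ∈ cb.P ∧ ∀ q ∈ cb.P, (le a q ↔ le p q)

/-- The projection cover property. -/
def ProjCoverProp : Prop := ∀ a : E, ∃ p : E, cb.IsProjCover a p

/-- `B` is a Boolean subalgebra of the set of projections. -/
noncomputable def BooleanSub (B : Set E) : Prop :=
  B ⊆ cb.P ∧ zero ∈ B ∧ one ∈ B ∧ (∀ p ∈ B, perp p ∈ B) ∧
  (∀ p ∈ B, ∀ q ∈ B, MCompat p q) ∧
  (∀ p ∈ B, ∀ q ∈ B, ∀ r : E, oplus p q = some r → r ∈ B)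

/-- The b-property. -/
noncomputable def BProperty : Prop :=
  ∀ a : E, ∃ B : Set E, cb.BooleanSub B ∧
    ∀ p ∈ cb.P, (a ∈ cb.Cset p ↔ ∀ b ∈ B, b ∈ cb.Cset p)

/-- Commutativity `aCb` of b-elements. -/
noncomputable def CommuteC (a b : E) : Prop :=
  ∀ p ∈ cb.Pbicomm a, ∀ q ∈ cb.Pbicomm b, MCompat p q

/-- The b-comparability property. -/
noncomputable def BComparability : Prop :=
  cb.BProperty ∧
  ∀ e f : E, cb.CommuteC e f → ∃ p : E, p ∈ cb.Pbicomm e ∧ p ∈ cb.Pbicomm f ∧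
    le (cb.J p e) (cb.J p f) ∧ le (cb.J (perp p) f) (cb.J (perp p) e)

/-- Spectrality: projection cover property plus b-comparability. -/
noncomputable def Spectral : Prop := cb.ProjCoverProp ∧ cb.BComparability

/-- `p` is the floor of `a` (the largest projection below `a`). -/
def IsFloor (a p : E) : Prop :=
  p ∈ cb.P ∧ le p a ∧ ∀ q ∈ cb.P, le q a → le q p

end CompressionBase

open EffectAlgebra in
/-- A sequential effect algebra (SEA). -/
class SEA (E : Type u) [EffectAlgebra E] where
  seq : E → E → E
  seq_oplus : ∀ a b c d : E, oplus b c = some d →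
    oplus (seq a b) (seq a c) = some (seq a d)
  one_seq : ∀ a : E, seq one a = a
  seq_zero_symm : ∀ a b : E, seq a b = zero → seq b a = zero
  comm_perp : ∀ a b : E, seq a b = seq b a → seq a (perp b) = seq (perp b) a
  comm_assoc : ∀ a b c : E, seq a b = seq b a → seq a (seq b c) = seq (seq a b) c
  comm_seq : ∀ a b c : E, seq c a = seq a c → seq c b = seq b c →
    seq c (seq a b) = seq (seq a b) c
  comm_oplus : ∀ a b c d : E, seq c a = seq a c → seq c b = seq b c →
    oplus a b = some d → seq c d = seq d c

namespace EffectAlgebra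

variable {E : Type u} [EffectAlgebra E]

section SEAdefs

variable [SEA E]

/-- `a | b` : the sequential product commutes. -/
def Commutes (a b : E) : Prop := SEA.seq a b = SEA.seq b a

/-- The commutant `S'` of a subset. -/
def commutant (S : Set E) : Set E := {a : E | ∀ s ∈ S, Commutes a s}

/-- The bicommutant `S''`. -/
def bicommutant (S : Set E) : Set E := commutant (commutant S)

/-- A sub-SEA: a sub-effect algebra closed under the sequential product. -/
noncomputable def SubSEA (S : Set E) : Prop :=
  zero ∈ S ∧ one ∈ S ∧ (∀ a ∈ S, perp a ∈ S) ∧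
  (∀ a ∈ S, ∀ b ∈ S, ∀ c : E, oplus a b = some c → c ∈ S) ∧
  (∀ a ∈ S, ∀ b ∈ S, SEA.seq a b ∈ S)

/-- A commutative sub-SEA. -/
noncomputable def CommSubSEA (S : Set E) : Prop :=
  SubSEA S ∧ ∀ a ∈ S, ∀ b ∈ S, Commutes a b

/-- A maximal commutative sub-SEA. -/
noncomputable def MaxCommSubSEA (S : Set E) : Prop :=
  CommSubSEA S ∧ ∀ T : Set E, CommSubSEA T → S ⊆ T → T = S

/-- `C(p)` for the canonical compression base `J_p = p ∘ ·` of a SEA. -/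
noncomputable def sC (p : E) : Set E :=
  {a : E | oplus (SEA.seq p a) (SEA.seq (perp p) a) = some a}

/-- `PC(a)` for the canonical compression base. -/
noncomputable def sPC (a : E) : Set E := {p : E | Sharp p ∧ a ∈ sC p}

/-- The P-bicommutant `P(a)` for the canonical compression base. -/
noncomputable def sPbicomm (a : E) : Set E :=
  {p : E | Sharp p ∧ a ∈ sC p ∧ ∀ q ∈ sPC a, q ∈ sC p}

/-- `p` is the projection cover of `a` (canonical compression base). -/
noncomputable def sIsProjCover (a p : E) : Prop :=
  Sharp p ∧ ∀ q : E, Sharp q → (le a q ↔ le p q)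

variable (E) in
/-- The projection cover property (canonical compression base). -/
noncomputable def sProjCoverProp : Prop := ∀ a : E, ∃ p : E, sIsProjCover a p

/-- `B` is a Boolean subalgebra of the sharp elements. -/
noncomputable def sBooleanSub (B : Set E) : Prop :=
  (∀ p ∈ B, Sharp p) ∧ zero ∈ B ∧ one ∈ B ∧ (∀ p ∈ B, perp p ∈ B) ∧
  (∀ p ∈ B, ∀ q ∈ B, MCompat p q) ∧
  (∀ p ∈ B, ∀ q ∈ B, ∀ r : E, oplus p q = some r → r ∈ B)

variable (E) in
/-- The b-property (canonical compression base). -/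
noncomputable def sBProperty : Prop :=
  ∀ a : E, ∃ B : Set E, sBooleanSub B ∧
    ∀ p : E, Sharp p → (a ∈ sC p ↔ ∀ b ∈ B, b ∈ sC p)

/-- `aCb` (canonical compression base). -/
noncomputable def sCommuteC (a b : E) : Prop :=
  ∀ p ∈ sPbicomm a, ∀ q ∈ sPbicomm b, MCompat p q

variable (E) in
/-- The b-comparability property (canonical compression base). -/
noncomputable def sBComparability : Prop :=
  sBProperty E ∧
  ∀ e f : E, sCommuteC e f → ∃ p : E, p ∈ sPbicomm e ∧ p ∈ sPbicomm f ∧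
    le (SEA.seq p e) (SEA.seq p f) ∧
    le (SEA.seq (perp p) f) (SEA.seq (perp p) e)

variable (E) in
/-- Spectrality of a SEA with respect to its canonical compression base. -/
noncomputable def sSpectral : Prop := sProjCoverProp E ∧ sBComparability E

/-- `p` is the floor of `a` (canonical compression base). -/
noncomputable def sIsFloor (a p : E) : Prop :=
  Sharp p ∧ le p a ∧ ∀ q : E, Sharp q → le q a → le q p

variable (E) in
/-- Property A. -/
def PropertyA : Prop :=
  ∀ (f : ℕ → E) (a b : E), (∀ n, le (f n) (f (n + 1))) →
    (∀ m n, Commutes (f m) (f n)) → IsSupSeq f a →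
    (∀ n, Commutes (f n) b) → Commutes a b

variable (E) in
/-- A σ-SEA. -/
def SigmaSEA : Prop :=
  MonotoneSigmaComplete E ∧
  ∀ (f : ℕ → E) (m : E), (∀ n, le (f (n + 1)) (f n)) → IsInfSeq f m →
    ∀ b : E, IsInfSeq (fun n => SEA.seq b (f n)) (SEA.seq b m) ∧
      ((∀ n, Commutes b (f n)) → Commutes b m)

/-- Iterated sequential powers: `seqPow a n = a^(n+1)`. -/
def seqPow (a : E) : ℕ → E
  | 0 => a
  | n + 1 => SEA.seq a (seqPow a n)

end SEAdefs

end EffectAlgebra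

open EffectAlgebra in
/-- A convex effect algebra: scalar multiplication by reals in `[0,1]`. -/
class ConvexEA (E : Type u) [EffectAlgebra E] where
  smul : ℝ → E → E
  smul_smul : ∀ (l m : ℝ) (a : E), 0 ≤ l → l ≤ 1 → 0 ≤ m → m ≤ 1 →
    smul m (smul l a) = smul (l * m) a
  smul_add_coeff : ∀ (l m : ℝ) (a : E), 0 ≤ l → 0 ≤ m → l + m ≤ 1 →
    oplus (smul l a) (smul m a) = some (smul (l + m) a)
  smul_oplus : ∀ (l : ℝ) (a b c : E), 0 ≤ l → l ≤ 1 → oplus a b = some c →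
    oplus (smul l a) (smul l b) = some (smul l c)
  one_smul : ∀ a : E, smul 1 a = a

namespace EffectAlgebra

variable {E : Type u} [EffectAlgebra E]

section Convexdefs

variable [ConvexEA E]

variable (E) in
/-- Strong archimedeanity. -/
def StronglyArchimedean : Prop :=
  ∀ a b c : E,
    (∀ n : ℕ, ∃ d : E, oplus b (ConvexEA.smul (1 / (n + 1) : ℝ) c) = some d ∧ le a d) →
    le a b

/-- `DistLE a b ε` encodes `‖a - b‖ ≤ ε` in the order unit norm:
`(1/2)a ≤ (1/2)b ⊕ (ε/2)1` and symmetrically (with `ε` clamped to `[0,1]`). -/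
def DistLE (a b : E) (ε : ℝ) : Prop :=
  (∃ d : E, oplus (ConvexEA.smul (2⁻¹ : ℝ) b) (ConvexEA.smul (min ε 1 / 2) one) = some d ∧
    le (ConvexEA.smul (2⁻¹ : ℝ) a) d) ∧
  (∃ d : E, oplus (ConvexEA.smul (2⁻¹ : ℝ) a) (ConvexEA.smul (min ε 1 / 2) one) = some d ∧
    le (ConvexEA.smul (2⁻¹ : ℝ) b) d)

/-- Norm convergence of a sequence. -/
def NormLimit (f : ℕ → E) (a : E) : Prop :=
  ∀ ε : ℝ, 0 < ε → ∃ N : ℕ, ∀ n ≥ N, DistLE (f n) a ε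

/-- Cauchy sequences with respect to the order unit norm. -/
def CauchySeqE (f : ℕ → E) : Prop :=
  ∀ ε : ℝ, 0 < ε → ∃ N : ℕ, ∀ m ≥ N, ∀ n ≥ N, DistLE (f m) (f n) ε

variable (E) in
/-- Norm completeness. -/
def NormComplete : Prop := ∀ f : ℕ → E, CauchySeqE f → ∃ a : E, NormLimit f a

/-- A norm-closed subset. -/
def NormClosedSet (S : Set E) : Prop :=
  ∀ (f : ℕ → E) (a : E), (∀ n, f n ∈ S) → NormLimit f a → a ∈ S

/-- A norm-complete subset. -/
def NormCompleteSet (S : Set E) : Prop :=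
  ∀ f : ℕ → E, (∀ n, f n ∈ S) → CauchySeqE f → ∃ a ∈ S, NormLimit f a

/-- One-dimensional elements. -/
def OneDim (a : E) : Prop :=
  ∀ b : E, le b a → ∃ t : ℝ, 0 ≤ t ∧ t ≤ 1 ∧ b = ConvexEA.smul t a

/-- `l` is a representation of `a` as a simple element:
`a = ⊕ μ_i p_i` with `μ_i ∈ [0,1]`, `p_i` sharp and `⊕ p_i = 1`. -/
noncomputable def SimpleRep (a : E) (l : List (ℝ × E)) : Prop :=
  (∀ x ∈ l, x.1 ∈ Set.Icc (0 : ℝ) 1 ∧ Sharp x.2) ∧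
  osum (l.map Prod.snd) = some one ∧
  osum (l.map fun x => ConvexEA.smul x.1 x.2) = some a

/-- Simple elements. -/
noncomputable def SimpleElem (a : E) : Prop := ∃ l : List (ℝ × E), SimpleRep a l

/-- A reduced representation: strictly increasing coefficients, nonzero sharp elements. -/
noncomputable def ReducedRep (a : E) (l : List (ℝ × E)) : Prop :=
  SimpleRep a l ∧ (l.map Prod.fst).Chain' (· < ·) ∧ ∀ x ∈ l, x.2 ≠ zero

end Convexdefs

section SpecRes

variable [SEA E] [ConvexEA E]

/-- `p` is the spectral resolution of `a` (canonical compression base): a family of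
projections in the bicommutant of `a`, nondecreasing and right continuous on `[0,1]`,
with `J_{p_λ}(a) ≤ λ p_λ` and `λ p_λ^⊥ ≤ J_{p_λ^⊥}(a)`. -/
noncomputable def sIsSpecRes (a : E) (p : ℝ → E) : Prop :=
  (∀ l : ℝ, 0 ≤ l → l ≤ 1 → p l ∈ sPbicomm a) ∧
  (∀ l m : ℝ, 0 ≤ l → l ≤ m → m ≤ 1 → le (p l) (p m)) ∧
  (∀ l : ℝ, 0 ≤ l → l < 1 →
    IsInfSet {x : E | ∃ m : ℝ, l < m ∧ m ≤ 1 ∧ x = p m} (p l)) ∧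
  (∀ l : ℝ, 0 ≤ l → l ≤ 1 →
    le (SEA.seq (p l) a) (ConvexEA.smul l (p l)) ∧
    le (ConvexEA.smul l (perp (p l))) (SEA.seq (perp (p l)) a))

end SpecRes

end EffectAlgebra

namespace CompressionBase

open EffectAlgebra

variable {E : Type u} [EffectAlgebra E] [ConvexEA E] (cb : CompressionBase E)

/-- `p` is the spectral resolution of `a` with respect to the compression base `cb`. -/
noncomputable def IsSpecRes (a : E) (p : ℝ → E) : Prop :=
  (∀ l : ℝ, 0 ≤ l → l ≤ 1 → p l ∈ cb.Pbicomm a) ∧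
  (∀ l m : ℝ, 0 ≤ l → l ≤ m → m ≤ 1 → le (p l) (p m)) ∧
  (∀ l : ℝ, 0 ≤ l → l < 1 →
    IsInfSet {x : E | ∃ m : ℝ, l < m ∧ m ≤ 1 ∧ x = p m} (p l)) ∧
  (∀ l : ℝ, 0 ≤ l → l ≤ 1 →
    le (cb.J (p l) a) (ConvexEA.smul l (p l)) ∧
    le (ConvexEA.smul l (perp (p l))) (cb.J (perp (p l)) a))

end CompressionBase

namespace EffectAlgebra

variable {E : Type u} [EffectAlgebra E]

lemma perp_spec (a : E) : oplus a (perp a) = some one :=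
  Classical.choose_spec (exists_perp a)

lemma perp_perp (a : E) : perp (perp a) = a :=
  perp_unique (perp_spec (perp a)) ((oplus_comm a (perp a)) ▸ perp_spec a)

lemma one_oplus_zero : oplus (one : E) zero = some one := by
  obtain ⟨b, hb⟩ := exists_perp (one : E)
  have hb' : oplus b one = some one := (oplus_comm (one : E) b) ▸ hb
  have hbz : b = zero := oplus_one hb'
  rwa [hbz] at hb

lemma oplus_zero (a : E) : oplus a zero = some a := by
  have key : ∀ x : E, oplus (perp x) zero = some (perp x) := by
    intro x
    obtain ⟨bc, hbc, habc⟩ := oplus_assoc (perp_spec x) one_oplus_zero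
    have : perp x = bc := perp_unique (perp_spec x) habc
    rwa [← this] at hbc
  have := key (perp a)
  rwa [perp_perp] at this

lemma zero_oplus (a : E) : oplus zero a = some a :=
  (oplus_comm a zero) ▸ oplus_zero a

lemma oplus_cancel {a b c d : E} (h1 : oplus a b = some d) (h2 : oplus a c = some d) :
    b = c := by
  have hd := perp_spec d
  obtain ⟨e, he, hae⟩ := oplus_assoc h1 hd
  have heq : perp a = e := perp_unique (perp_spec a) hae
  obtain ⟨e', he', hae'⟩ := oplus_assoc h2 hd
  have heq' : perp a = e' := perp_unique (perp_spec a) hae'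
  -- he : oplus b (perp d) = some (perp a), he' : oplus c (perp d) = some (perp a)
  rw [← heq] at he; rw [← heq'] at he'
  obtain ⟨w, hw, hbw⟩ := oplus_assoc he ((oplus_comm a (perp a)) ▸ perp_spec a)
  obtain ⟨w', hw', hcw'⟩ := oplus_assoc he' ((oplus_comm a (perp a)) ▸ perp_spec a)
  have : w = w' := Option.some.inj (hw.symm.trans hw')
  rw [← this] at hcw'
  exact perp_unique ((oplus_comm b w) ▸ hbw) ((oplus_comm c w) ▸ hcw')

lemma le_refl' (a : E) : le a a := ⟨zero, oplus_zero a⟩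

lemma le_trans' {a b c : E} (h1 : le a b) (h2 : le b c) : le a c := by
  obtain ⟨u, hu⟩ := h1
  obtain ⟨v, hv⟩ := h2
  obtain ⟨w, hw, haw⟩ := oplus_assoc hu hv
  exact ⟨w, haw⟩

lemma zero_le' (a : E) : le zero a := ⟨a, zero_oplus a⟩

lemma le_one' (a : E) : le a one := ⟨perp a, perp_spec a⟩

lemma le_zero_eq {a : E} (h : le a zero) : a = zero := by
  obtain ⟨c, hc⟩ := h
  obtain ⟨e, hce, hae⟩ := oplus_assoc hc (zero_oplus one)
  have hcz : c = zero := oplus_one hce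
  rw [hcz, zero_oplus] at hce
  have he : e = one := (Option.some.inj hce).symm
  rw [he] at hae
  exact oplus_one hae

lemma le_antisymm' {a b : E} (h1 : le a b) (h2 : le b a) : a = b := by
  obtain ⟨c, hc⟩ := h1
  obtain ⟨d, hd⟩ := h2
  obtain ⟨e, hce, hae⟩ := oplus_assoc hc hd
  have he : e = zero := oplus_cancel hae (oplus_zero a)
  rw [he] at hce
  have hc0 : c = zero := le_zero_eq ⟨d, hce⟩
  rw [hc0, oplus_zero] at hc
  exact Option.some.inj hc

lemma oplus_le_left {x y s : E} (h : oplus x y = some s) : le x s := ⟨y, h⟩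

lemma oplus_le_right {x y s : E} (h : oplus x y = some s) : le y s :=
  ⟨x, (oplus_comm x y) ▸ h⟩

/-- If `x ≤ x'` and `x' ⊕ y` is defined then `x ⊕ y` is defined and below it. -/
lemma le_oplus_mono_left {x x' y s : E} (hx : le x x') (h : oplus x' y = some s) :
    ∃ t : E, oplus x y = some t ∧ le t s := by
  obtain ⟨c, hc⟩ := hx
  obtain ⟨e, hce, hxe⟩ := oplus_assoc hc h
  obtain ⟨w, hyx, hcw⟩ := oplus_assoc hce ((oplus_comm x e) ▸ hxe)
  exact ⟨w, (oplus_comm y x) ▸ hyx, ⟨c, (oplus_comm c w) ▸ hcw⟩⟩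

lemma le_oplus_mono_right {x y y' s : E} (hy : le y y') (h : oplus x y' = some s) :
    ∃ t : E, oplus x y = some t ∧ le t s := by
  obtain ⟨t, ht, hts⟩ := le_oplus_mono_left hy ((oplus_comm x y') ▸ h)
  exact ⟨t, (oplus_comm y x) ▸ ht, hts⟩

lemma oplus_le_oplus {x x' y y' s s' : E} (hx : le x x') (hy : le y y')
    (h : oplus x y = some s) (h' : oplus x' y' = some s') : le s s' := by
  obtain ⟨t, ht, hts⟩ := le_oplus_mono_left hx h'
  -- ht : oplus x y' = some t
  obtain ⟨u, hu, hut⟩ := le_oplus_mono_left hy ((oplus_comm x y') ▸ ht)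
  -- hu : oplus y x = some u
  have : u = s := Option.some.inj ((((oplus_comm y x) ▸ hu) : oplus x y = some u).symm.trans h)
  rw [this] at hut
  exact le_trans' hut hts

lemma perp_antitone {a b : E} (h : le a b) : le (perp b) (perp a) := by
  obtain ⟨c, hc⟩ := h
  obtain ⟨e, hce, hae⟩ := oplus_assoc hc (perp_spec b)
  have : perp a = e := perp_unique (perp_spec a) hae
  rw [← this] at hce
  exact ⟨c, (oplus_comm c (perp b)) ▸ hce⟩

lemma le_of_perp_le_perp {a b : E} (h : le (perp b) (perp a)) : le a b := by
  have := perp_antitone h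
  rwa [perp_perp, perp_perp] at this

lemma perp_zero : perp (zero : E) = one :=
  perp_unique (perp_spec zero) (zero_oplus one)

lemma perp_one : perp (one : E) = zero :=
  perp_unique (perp_spec one) one_oplus_zero

end EffectAlgebra
namespace EffectAlgebra

variable {E : Type u} [EffectAlgebra E]

section Convex

variable [ConvexEA E]

lemma smul_coeff_zero (a : E) : ConvexEA.smul (0 : ℝ) a = zero := by
  have h := ConvexEA.smul_add_coeff (0:ℝ) 0 a le_rfl le_rfl (by norm_num)
  rw [add_zero] at h
  exact oplus_cancel h (oplus_zero _)

lemma smul_zero_elem {l : ℝ} (h0 : 0 ≤ l) (h1 : l ≤ 1) :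
    ConvexEA.smul l (zero : E) = zero := by
  have h := ConvexEA.smul_oplus l (zero:E) zero zero h0 h1 (oplus_zero zero)
  exact oplus_cancel h (oplus_zero _)

lemma smul_le_coeff {l m : ℝ} (a : E) (h0 : 0 ≤ l) (hlm : l ≤ m) (h1 : m ≤ 1) :
    le (ConvexEA.smul l a) (ConvexEA.smul m a) := by
  have h := ConvexEA.smul_add_coeff l (m - l) a h0 (by linarith) (by linarith)
  rw [add_sub_cancel] at h
  exact ⟨_, h⟩

lemma smul_le_smul {l : ℝ} {a b : E} (h0 : 0 ≤ l) (h1 : l ≤ 1) (hab : le a b) :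
    le (ConvexEA.smul l a) (ConvexEA.smul l b) := by
  obtain ⟨c, hc⟩ := hab
  exact ⟨_, ConvexEA.smul_oplus l a c b h0 h1 hc⟩

lemma smul_le_self {l : ℝ} (a : E) (h0 : 0 ≤ l) (h1 : l ≤ 1) :
    le (ConvexEA.smul l a) a := by
  have := smul_le_coeff a h0 h1 le_rfl
  rwa [ConvexEA.one_smul] at this

/-- `n`-fold orthosum of a single element. -/
def nsum (x : E) : ℕ → Option E
  | 0 => some zero
  | n + 1 => (nsum x n).bind fun s => oplus x s

lemma nsum_smul_coeff (y : E) {t : ℝ} (ht : 0 ≤ t) :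
    ∀ k : ℕ, (k : ℝ) * t ≤ 1 →
      nsum (ConvexEA.smul t y) k = some (ConvexEA.smul ((k : ℝ) * t) y)
  | 0, _ => by simp [nsum, smul_coeff_zero]
  | k + 1, hk => by
    have hkt : (k : ℝ) * t ≤ 1 := by
      have : (k : ℝ) * t ≤ ((k : ℝ) + 1) * t := by nlinarith
      calc (k:ℝ) * t ≤ ((k:ℝ)+1) * t := this
        _ ≤ 1 := by push_cast at hk; linarith
    have ih := nsum_smul_coeff y ht k hkt
    show (nsum (ConvexEA.smul t y) k).bind _ = _
    rw [ih]
    have h := ConvexEA.smul_add_coeff t ((k:ℝ)*t) y ht (by positivity)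
      (by push_cast at hk ⊢; linarith)
    simp only [Option.bind_some]
    rw [h]
    congr 1
    push_cast
    ring_nf

lemma nsum_smul {x s : E} {l : ℝ} (h0 : 0 ≤ l) (h1 : l ≤ 1) :
    ∀ k : ℕ, nsum x k = some s → nsum (ConvexEA.smul l x) k = some (ConvexEA.smul l s) := by
  intro k
  induction k generalizing s with
  | zero =>
    intro h
    have : s = zero := (Option.some.inj h).symm
    simp [nsum, this, smul_zero_elem h0 h1]
  | succ k ih =>
    intro h
    obtain ⟨u, hu, hxu⟩ := Option.bind_eq_some_iff.mp h
    have ihu := ih hu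
    show (nsum (ConvexEA.smul l x) k).bind _ = _
    rw [ihu]
    simp only [Option.bind_some]
    exact ConvexEA.smul_oplus l x u s h0 h1 hxu

end Convex

section SEAlem

variable [SEA E]

lemma seq_zero (a : E) : SEA.seq a (zero : E) = zero := by
  have h := SEA.seq_oplus a zero zero zero (oplus_zero zero)
  exact oplus_cancel h (oplus_zero _)

lemma seq_one (a : E) : SEA.seq a (one : E) = a := by
  have h0 : SEA.seq a (zero : E) = SEA.seq (zero : E) a := by
    rw [seq_zero, SEA.seq_zero_symm a zero (seq_zero a)]
  have := SEA.comm_perp a zero h0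
  rw [perp_zero] at this
  rw [this, SEA.one_seq]

lemma seq_le_right (a : E) {b c : E} (h : le b c) : le (SEA.seq a b) (SEA.seq a c) := by
  obtain ⟨d, hd⟩ := h
  exact ⟨SEA.seq a d, SEA.seq_oplus a b d c hd⟩

lemma seq_le_self (a b : E) : le (SEA.seq a b) a := by
  have := seq_le_right a (le_one' b)
  rwa [seq_one] at this

lemma commutes_symm {a b : E} (h : Commutes a b) : Commutes b a := h.symm

lemma commutes_perp {a b : E} (h : Commutes a b) : Commutes a (perp b) :=
  SEA.comm_perp a b h

lemma sharp_seq_perp {p : E} (hp : Sharp p) : SEA.seq p (perp p) = zero := by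
  apply hp
  · exact seq_le_self p (perp p)
  · have hc : Commutes p (perp p) := SEA.comm_perp p p rfl
    rw [hc]
    exact seq_le_self (perp p) p

lemma sharp_perp {p : E} (hp : Sharp p) : Sharp (perp p) := by
  intro x h1 h2
  rw [perp_perp] at h2
  exact hp x h2 h1

lemma sharp_seq_self {p : E} (hp : Sharp p) : SEA.seq p p = p := by
  have h := SEA.seq_oplus p p (perp p) one (perp_spec p)
  rw [sharp_seq_perp hp, seq_one, oplus_zero] at h
  exact Option.some.inj h

/-- If `x ≤ p` with `p` sharp then `x` commutes with `p` and `p ∘ x = x`. -/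
lemma le_sharp {p x : E} (hp : Sharp p) (hx : le x p) :
    Commutes x p ∧ SEA.seq x p = x := by
  have h1 : le (SEA.seq (perp p) x) (SEA.seq (perp p) p) := seq_le_right (perp p) hx
  have h2 : SEA.seq (perp p) p = zero := by
    have hc : Commutes p (perp p) := SEA.comm_perp p p rfl
    rw [← hc]
    exact sharp_seq_perp hp
  rw [h2] at h1
  have h3 : SEA.seq (perp p) x = zero := le_zero_eq h1
  have h4 : SEA.seq x (perp p) = zero := SEA.seq_zero_symm (perp p) x h3
  have h5 : Commutes x (perp p) := by rw [Commutes, h3, h4]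
  have h6 : Commutes x p := by
    have := SEA.comm_perp x (perp p) h5
    rwa [perp_perp] at this
  have h7 := SEA.seq_oplus x p (perp p) one (perp_spec p)
  rw [h4, seq_one, oplus_zero] at h7
  exact ⟨h6, Option.some.inj h7⟩

/-- If `a ∈ C(p)` for `p` sharp, then `a` and `p` commute. -/
lemma commutes_of_sC {p a : E} (hp : Sharp p)
    (h : oplus (SEA.seq p a) (SEA.seq (perp p) a) = some a) : Commutes a p := by
  have hx : le (SEA.seq p a) p := seq_le_self p a
  have hy : le (SEA.seq (perp p) a) (perp p) := seq_le_self (perp p) a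
  have cx : Commutes (SEA.seq p a) p := (le_sharp hp hx).1
  have cy : Commutes (SEA.seq (perp p) a) p := by
    have := (le_sharp (sharp_perp hp) hy).1
    have := SEA.comm_perp _ _ this
    rwa [perp_perp] at this
  have := SEA.comm_oplus (SEA.seq p a) (SEA.seq (perp p) a) p a cx.symm cy.symm h
  exact this.symm

lemma pow_comm_self (a : E) : ∀ n : ℕ, Commutes a (seqPow a n)
  | 0 => rfl
  | n + 1 => SEA.comm_seq a (seqPow a n) a rfl (pow_comm_self a n)

lemma pow_comm (a : E) : ∀ m n : ℕ, Commutes (seqPow a m) (seqPow a n)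
  | 0, n => pow_comm_self a n
  | m + 1, n => by
    have h1 : SEA.seq (seqPow a n) a = SEA.seq a (seqPow a n) := (pow_comm_self a n).symm
    have h2 : SEA.seq (seqPow a n) (seqPow a m) = SEA.seq (seqPow a m) (seqPow a n) :=
      (pow_comm a m n).symm
    exact (SEA.comm_seq a (seqPow a m) (seqPow a n) h1 h2).symm

lemma pow_succ_le (a : E) (n : ℕ) : le (seqPow a (n + 1)) (seqPow a n) := by
  show le (SEA.seq a (seqPow a n)) (seqPow a n)
  rw [pow_comm_self a n]
  exact seq_le_self (seqPow a n) a

end SEAlem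

end EffectAlgebra
namespace EffectAlgebra

variable {E : Type u} [EffectAlgebra E]

section Homog

variable [SEA E] [ConvexEA E]

lemma nsum_seq (x : E) {y s : E} :
    ∀ k : ℕ, nsum y k = some s → nsum (SEA.seq x y) k = some (SEA.seq x s) := by
  intro k
  induction k generalizing s with
  | zero =>
    intro h
    have : s = zero := (Option.some.inj h).symm
    simp [nsum, this, seq_zero]
  | succ k ih =>
    intro h
    obtain ⟨u, hu, hyu⟩ := Option.bind_eq_some_iff.mp h
    have ihu := ih hu
    show (nsum (SEA.seq x y) k).bind _ = _
    rw [ihu]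
    simp only [Option.bind_some]
    exact SEA.seq_oplus x y u s hyu

lemma seq_smul_unit (x y : E) {n : ℕ} (hn : 0 < n) :
    SEA.seq x (ConvexEA.smul (1 / (n : ℝ)) y) = ConvexEA.smul (1 / (n : ℝ)) (SEA.seq x y) := by
  have hnR : (0:ℝ) < (n:ℝ) := by exact_mod_cast hn
  have h0 : (0:ℝ) ≤ 1 / (n:ℝ) := by positivity
  have hmul : (n : ℝ) * (1 / (n:ℝ)) = 1 := by field_simp
  have h1' : (n:ℝ) * (1 / (n:ℝ)) ≤ 1 := by rw [hmul]
  have h1 : nsum (ConvexEA.smul (1 / (n:ℝ)) y) n = some y := by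
    have := nsum_smul_coeff y h0 n h1'
    rwa [hmul, ConvexEA.one_smul] at this
  have h2 := nsum_seq x n h1
  -- h2 : nsum (seq x (smul (1/n) y)) n = some (seq x y)
  have h3 := nsum_smul (x := SEA.seq x (ConvexEA.smul (1 / (n:ℝ)) y)) h0
    (by rw [div_le_one hnR]; exact_mod_cast hn) n h2
  have h4 := nsum_smul_coeff (SEA.seq x (ConvexEA.smul (1 / (n:ℝ)) y)) h0 n h1'
  rw [hmul, ConvexEA.one_smul] at h4
  have := h4.symm.trans h3
  exact Option.some.inj this

lemma seq_smul_div (x y : E) {j n : ℕ} (hj : j ≤ n) (hn : 0 < n) :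
    SEA.seq x (ConvexEA.smul ((j : ℝ) / (n : ℝ)) y)
      = ConvexEA.smul ((j : ℝ) / (n : ℝ)) (SEA.seq x y) := by
  have hnR : (0:ℝ) < (n:ℝ) := by exact_mod_cast hn
  have h0 : (0:ℝ) ≤ 1 / (n:ℝ) := by positivity
  have hjn : (j : ℝ) * (1 / (n:ℝ)) ≤ 1 := by
    rw [mul_one_div, div_le_one hnR]; exact_mod_cast hj
  have e1 : (j:ℝ) / (n:ℝ) = (j:ℝ) * (1 / (n:ℝ)) := by ring
  have h1 := nsum_smul_coeff y h0 j hjn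
  -- h1 : nsum (smul (1/n) y) j = some (smul (j * (1/n)) y)
  have h2 := nsum_seq x j h1
  rw [seq_smul_unit x y hn] at h2
  have h3 := nsum_smul_coeff (SEA.seq x y) h0 j hjn
  have := h3.symm.trans h2
  rw [e1]
  exact (Option.some.inj this).symm

/-- Homogeneity of the sequential product for rational scalars. -/
lemma seq_smul_rat (x y : E) {t : ℝ} (h : ∃ j n : ℕ, j ≤ n ∧ 0 < n ∧ t = (j : ℝ) / (n : ℝ)) :
    SEA.seq x (ConvexEA.smul t y) = ConvexEA.smul t (SEA.seq x y) := by
  obtain ⟨j, n, hj, hn, rfl⟩ := h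
  exact seq_smul_div x y hj hn

end Homog

section MC

lemma mcompat_symm {a b : E} (h : MCompat a b) : MCompat b a := by
  obtain ⟨a₁, b₁, c, s, t, h1, h2, h3, h4⟩ := h
  exact ⟨b₁, a₁, c, s, t, (oplus_comm a₁ b₁) ▸ h1, h2, h4, h3⟩

variable [SEA E]

/-- If `q` decomposes over `p` then `p` and `q` are Mackey compatible. -/
lemma mcompat_of_sC {p q : E}
    (h : oplus (SEA.seq p q) (SEA.seq (perp p) q) = some q) : MCompat p q := by
  set c := SEA.seq p q with hc_def
  set b₁ := SEA.seq (perp p) q with hb_def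
  have hcp : le c p := seq_le_self p q
  obtain ⟨a₁, ha₁⟩ := hcp
  have hb₁ : le b₁ (perp p) := seq_le_self (perp p) q
  obtain ⟨u, hu⟩ := hb₁
  -- p ⊕ b₁ is defined
  obtain ⟨w, hbw, huw⟩ := oplus_assoc ((oplus_comm b₁ u) ▸ hu)
    ((oplus_comm p (perp p)) ▸ perp_spec p)
  -- hbw : oplus b₁ p = some w
  have hPb : oplus p b₁ = some w := (oplus_comm b₁ p) ▸ hbw
  obtain ⟨v, hcv, hav⟩ := oplus_assoc ((oplus_comm c a₁) ▸ ha₁) hPb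
  -- hcv : oplus c b₁ = some v, hav : oplus a₁ v = some w
  have hvq : v = q := Option.some.inj (hcv.symm.trans h)
  rw [hvq] at hav
  obtain ⟨z, hba, hcz⟩ := oplus_assoc h ((oplus_comm a₁ q) ▸ hav)
  -- hba : oplus b₁ a₁ = some z, hcz : oplus c z = some w
  refine ⟨a₁, b₁, c, z, w, (oplus_comm b₁ a₁) ▸ hba, (oplus_comm c z) ▸ hcz, (oplus_comm c a₁) ▸ ha₁, ?_⟩
  exact (oplus_comm c b₁) ▸ h

end MC

end EffectAlgebra
namespace EffectAlgebra

variable {E : Type u} [EffectAlgebra E]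

section Main

variable [SEA E] [ConvexEA E]

/-- A sharp element below `a` is below every sequential power of `a`. -/
lemma sharp_floor_le_pow {a f : E} (hfS : Sharp f) (hfa : le f a) :
    ∀ n : ℕ, le f (seqPow a n) := by
  have h1 : le (perp a) (perp f) := perp_antitone hfa
  have h2 : SEA.seq f (perp a) = zero := by
    have := seq_le_right f h1
    rw [sharp_seq_perp hfS] at this
    exact le_zero_eq this
  have h3 : SEA.seq (perp a) f = zero := SEA.seq_zero_symm f (perp a) h2
  have h5 : Commutes f (perp a) := h2.trans h3.symm
  have h6 : Commutes f a := by
    have := SEA.comm_perp f (perp a) h5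
    rwa [perp_perp] at this
  have h7 := SEA.seq_oplus f a (perp a) one (perp_spec a)
  rw [h2, seq_one, oplus_zero] at h7
  have hfa' : SEA.seq a f = f := by rw [← h6]; exact Option.some.inj h7
  have pn : ∀ n : ℕ, SEA.seq (seqPow a n) f = f := by
    intro n
    induction n with
    | zero => exact hfa'
    | succ n ih =>
      show SEA.seq (SEA.seq a (seqPow a n)) f = f
      rw [← SEA.comm_assoc a (seqPow a n) f (pow_comm_self a n), ih, hfa']
  intro n
  have := seq_le_self (seqPow a n) f
  rwa [pn n] at this

/-- Iterated powers are dominated by `λ^(k+1) p ⊕ p^⊥` when `J_p(a) ≤ λ p`. -/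
lemma pow_le_scaled {a p : E} (hpS : Sharp p)
    (hpa : oplus (SEA.seq p a) (SEA.seq (perp p) a) = some a)
    {lam : ℝ} (hrat : ∃ j n : ℕ, j ≤ n ∧ 0 < n ∧ lam = (j : ℝ) / (n : ℝ))
    (hle : le (SEA.seq p a) (ConvexEA.smul lam p)) :
    ∀ k : ℕ, ∃ s : E, oplus (ConvexEA.smul (lam ^ (k + 1)) p) (perp p) = some s ∧
      le (seqPow a k) s := by
  have h0 : 0 ≤ lam := by obtain ⟨j, n, _, hn, rfl⟩ := hrat; positivity
  have h1 : lam ≤ 1 := by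
    obtain ⟨j, n, hj, hn, rfl⟩ := hrat
    rw [div_le_one (by exact_mod_cast hn)]; exact_mod_cast hj
  have hratpow : ∀ i : ℕ, ∃ j n : ℕ, j ≤ n ∧ 0 < n ∧ lam ^ i = (j : ℝ) / (n : ℝ) := by
    intro i
    obtain ⟨j, n, hj, hn, rfl⟩ := hrat
    exact ⟨j ^ i, n ^ i, Nat.pow_le_pow_left hj i, Nat.pow_pos hn,
      by push_cast; rw [div_pow]⟩
  have hcomm : Commutes a p := commutes_of_sC hpS hpa
  have hcommp : Commutes a (perp p) := SEA.comm_perp a p hcomm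
  have defined : ∀ t : ℝ, 0 ≤ t → t ≤ 1 →
      ∃ s : E, oplus (ConvexEA.smul t p) (perp p) = some s := by
    intro t ht0 ht1
    obtain ⟨s, hs, _⟩ := le_oplus_mono_left (smul_le_self p ht0 ht1) (perp_spec p)
    exact ⟨s, hs⟩
  intro k
  induction k with
  | zero =>
    obtain ⟨s, hs⟩ := defined (lam ^ 1) (by positivity) (by rw [pow_one]; exact h1)
    refine ⟨s, hs, ?_⟩
    have hb1 : le (SEA.seq p a) (ConvexEA.smul (lam ^ 1) p) := by rw [pow_one]; exact hle
    exact oplus_le_oplus hb1 (seq_le_self (perp p) a) hpa hs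
  | succ k ih =>
    obtain ⟨s, hs, hks⟩ := ih
    obtain ⟨s', hs'⟩ := defined (lam ^ (k + 2)) (by positivity) (pow_le_one₀ h0 h1)
    have h2 := SEA.seq_oplus a _ _ s hs
    rw [seq_smul_rat a p (hratpow (k + 1))] at h2
    have hb1 : le (ConvexEA.smul (lam ^ (k + 1)) (SEA.seq a p))
        (ConvexEA.smul (lam ^ (k + 2)) p) := by
      have hap : SEA.seq a p = SEA.seq p a := hcomm
      have step1 : le (ConvexEA.smul (lam ^ (k + 1)) (SEA.seq a p))
          (ConvexEA.smul (lam ^ (k + 1)) (ConvexEA.smul lam p)) := by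
        apply smul_le_smul (by positivity) (pow_le_one₀ h0 h1)
        rw [hap]; exact hle
      have step2 : ConvexEA.smul (lam ^ (k + 1)) (ConvexEA.smul lam p)
          = ConvexEA.smul (lam ^ (k + 2)) p := by
        rw [ConvexEA.smul_smul lam (lam ^ (k + 1)) p h0 h1 (by positivity)
          (pow_le_one₀ h0 h1)]
        congr 1
        ring
      rwa [step2] at step1
    have hb2 : le (SEA.seq a (perp p)) (perp p) := by
      rw [hcommp]; exact seq_le_self (perp p) a
    have hss' : le (SEA.seq a s) s' := oplus_le_oplus hb1 hb2 h2 hs'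
    exact ⟨s', hs', le_trans' (seq_le_right a hks) hss'⟩

/-- A common lower bound of all powers is below `p^⊥`. -/
lemma lower_le_perp (harch : StronglyArchimedean E) {a p b : E} (hpS : Sharp p)
    (hpa : oplus (SEA.seq p a) (SEA.seq (perp p) a) = some a)
    {lam : ℝ} (hrat : ∃ j n : ℕ, j ≤ n ∧ 0 < n ∧ lam = (j : ℝ) / (n : ℝ))
    (hlt : lam < 1)
    (hle : le (SEA.seq p a) (ConvexEA.smul lam p))
    (hb : ∀ k : ℕ, le b (seqPow a k)) : le b (perp p) := by
  have h0 : 0 ≤ lam := by obtain ⟨j, n, _, hn, rfl⟩ := hrat; positivity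
  apply harch b (perp p) p
  intro n
  have hε0 : (0:ℝ) < 1 / ((n:ℝ) + 1) := by positivity
  have hε1 : 1 / ((n:ℝ) + 1) ≤ 1 := by
    rw [div_le_one (by positivity)]
    have : (0:ℝ) ≤ (n:ℝ) := Nat.cast_nonneg n
    linarith
  obtain ⟨k, hk⟩ := exists_pow_lt_of_lt_one hε0 hlt
  have hk' : lam ^ (k + 1) ≤ 1 / ((n:ℝ) + 1) := by
    have : lam ^ (k + 1) ≤ lam ^ k := pow_le_pow_of_le_one h0 (le_of_lt hlt) (by omega)
    linarith
  obtain ⟨s, hs, hks⟩ := pow_le_scaled hpS hpa hrat hle k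
  obtain ⟨d, hd, _⟩ := le_oplus_mono_left (smul_le_self p (le_of_lt hε0) hε1) (perp_spec p)
  have hsd : le s d :=
    oplus_le_oplus (smul_le_coeff p (by positivity) hk' hε1) (le_refl' (perp p)) hs hd
  refine ⟨d, ?_, le_trans' (hb k) (le_trans' hks hsd)⟩
  rw [oplus_comm]
  exact_mod_cast hd

/-- If `x ≤ r` and `(m+1)/(m+2) · r ≤ x` for all `m`, then `x = r`. -/
lemma eq_of_approx (harch : StronglyArchimedean E) {r x : E} (hxr : le x r)
    (hx : ∀ m : ℕ, le (ConvexEA.smul (((m:ℝ) + 1) / ((m:ℝ) + 2)) r) x) : x = r := by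
  obtain ⟨s, hs⟩ := hxr
  have hsm : ∀ m : ℕ, le s (ConvexEA.smul (1 / ((m:ℝ) + 2)) r) := by
    intro m
    have harith : ((m:ℝ) + 1) / ((m:ℝ) + 2) + 1 / ((m:ℝ) + 2) = 1 := by
      field_simp; ring
    have h1 : oplus (ConvexEA.smul (((m:ℝ) + 1) / ((m:ℝ) + 2)) r)
        (ConvexEA.smul (1 / ((m:ℝ) + 2)) r) = some r := by
      have := ConvexEA.smul_add_coeff (((m:ℝ) + 1) / ((m:ℝ) + 2)) (1 / ((m:ℝ) + 2)) r
        (by positivity) (by positivity) (le_of_eq harith)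
      rwa [harith, ConvexEA.one_smul] at this
    obtain ⟨e, he⟩ := hx m
    obtain ⟨u, heu, hlu⟩ := oplus_assoc he hs
    have hu : u = ConvexEA.smul (1 / ((m:ℝ) + 2)) r := oplus_cancel hlu h1
    rw [hu] at heu
    exact oplus_le_right heu
  have hs0 : s = zero := by
    apply le_zero_eq
    apply harch s zero r
    intro n
    refine ⟨ConvexEA.smul (1 / ((n:ℝ) + 1)) r, zero_oplus _, ?_⟩
    cases n with
    | zero =>
      have : (1 / ((0:ℕ):ℝ) + 1 : ℝ) = 1 := by norm_num
      have h1 : ConvexEA.smul (1 / (((0:ℕ):ℝ) + 1)) r = r := by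
        norm_num [ConvexEA.one_smul]
      rw [h1]
      exact oplus_le_right hs
    | succ m =>
      have : (1 : ℝ) / (((m+1:ℕ):ℝ) + 1) = 1 / ((m:ℝ) + 2) := by push_cast; ring_nf
      rw [this]
      exact hsm m
  rw [hs0, oplus_zero] at hs
  exact Option.some.inj hs

/-- `a` C-commutes with every rational multiple of `1`. -/
lemma scommC_smul_one (a : E) {lam : ℝ}
    (hrat : ∃ j n : ℕ, j ≤ n ∧ 0 < n ∧ lam = (j : ℝ) / (n : ℝ)) :
    sCommuteC a (ConvexEA.smul lam one) := by
  have h0 : 0 ≤ lam := by obtain ⟨j, n, _, hn, rfl⟩ := hrat; positivity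
  have h1 : lam ≤ 1 := by
    obtain ⟨j, n, hj, hn, rfl⟩ := hrat
    rw [div_le_one (by exact_mod_cast hn)]; exact_mod_cast hj
  intro p hp q hq
  obtain ⟨hpS, -, -⟩ := hp
  obtain ⟨hqS, -, hq3⟩ := hq
  have hmem : p ∈ sPC (ConvexEA.smul lam one) := by
    refine ⟨hpS, ?_⟩
    show oplus (SEA.seq p (ConvexEA.smul lam one))
      (SEA.seq (perp p) (ConvexEA.smul lam one)) = some (ConvexEA.smul lam one)
    rw [seq_smul_rat p one hrat, seq_smul_rat (perp p) one hrat, seq_one, seq_one]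
    exact ConvexEA.smul_oplus lam p (perp p) one h0 h1 (perp_spec p)
  have hpq : oplus (SEA.seq q p) (SEA.seq (perp q) p) = some p := hq3 p hmem
  exact mcompat_symm (mcompat_of_sC hpq)

end Main

end EffectAlgebra
open EffectAlgebra in
/-- in a spectral strongly archimedean convex SEA with property A, the
sequential powers of `a` form a descending sequence of mutually commuting elements whose
infimum exists and equals the floor of `a`. Here `seqPow a k = a^(k+1)`. -/
theorem stmt11 {E : Type u} [EffectAlgebra E] [SEA E] [ConvexEA E]
    (harch : StronglyArchimedean E) (hA : PropertyA E) (hspec : sSpectral E)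
    (a : E) :
    (∀ n : ℕ, le (seqPow a (n + 1)) (seqPow a n)) ∧
    (∀ m n : ℕ, Commutes (seqPow a m) (seqPow a n)) ∧
    ∃ f : E, sIsFloor a f ∧ IsInfSeq (seqPow a) f := by
  obtain ⟨hcov, hbprop, hcomp⟩ := hspec
  -- construct the floor as the complement of the projection cover of `a^⊥`
  obtain ⟨p₀, hp₀S, hp₀⟩ := hcov (perp a)
  set f := perp p₀ with hf_def
  have hpa0 : le (perp a) p₀ := (hp₀ p₀ hp₀S).mpr (le_refl' p₀)
  have hfa : le f a := by
    have := perp_antitone hpa0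
    rwa [perp_perp] at this
  have hfS : Sharp f := sharp_perp hp₀S
  have hfloor : sIsFloor a f := by
    refine ⟨hfS, hfa, fun q hqS hqa => ?_⟩
    have h1 : le (perp a) (perp q) := perp_antitone hqa
    have h2 : le p₀ (perp q) := (hp₀ (perp q) (sharp_perp hqS)).mp h1
    have := perp_antitone h2
    rwa [perp_perp] at this
  have hfpow : ∀ n : ℕ, le f (seqPow a n) := sharp_floor_le_pow hfS hfa
  refine ⟨pow_succ_le a, pow_comm a, f, hfloor, hfpow, ?_⟩
  -- the lower bound property
  intro b hb
  obtain ⟨r, hrS, hr⟩ := hcov b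
  have hbr : le b r := (hr r hrS).mpr (le_refl' r)
  have key : ∀ m : ℕ, le (ConvexEA.smul (((m:ℝ) + 1) / ((m:ℝ) + 2)) r) (SEA.seq r a) := by
    intro m
    set lam := ((m:ℝ) + 1) / ((m:ℝ) + 2) with hlam
    have hrat : ∃ j n : ℕ, j ≤ n ∧ 0 < n ∧ lam = (j : ℝ) / (n : ℝ) :=
      ⟨m + 1, m + 2, by omega, by omega, by rw [hlam]; push_cast; ring⟩
    have h0 : 0 ≤ lam := by rw [hlam]; positivity
    have h1 : lam ≤ 1 := by
      rw [hlam, div_le_one (by positivity)]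
      linarith
    have hlt : lam < 1 := by
      rw [hlam, div_lt_one (by positivity)]
      linarith
    have hC : sCommuteC a (ConvexEA.smul lam one) := scommC_smul_one a hrat
    obtain ⟨p, hpP, -, hle1, hle2⟩ := hcomp a (ConvexEA.smul lam one) hC
    obtain ⟨hpS, hpa', -⟩ := hpP
    have hpa : oplus (SEA.seq p a) (SEA.seq (perp p) a) = some a := hpa'
    have e1 : SEA.seq p (ConvexEA.smul lam one) = ConvexEA.smul lam p := by
      rw [seq_smul_rat p one hrat, seq_one]
    have e2 : SEA.seq (perp p) (ConvexEA.smul lam one) = ConvexEA.smul lam (perp p) := by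
      rw [seq_smul_rat (perp p) one hrat, seq_one]
    rw [e1] at hle1
    rw [e2] at hle2
    have hbp : le b (perp p) := lower_le_perp harch hpS hpa hrat hlt hle1 hb
    have hrp : le r (perp p) := (hr (perp p) (sharp_perp hpS)).mp hbp
    have c1 : le (ConvexEA.smul lam r) (ConvexEA.smul lam (perp p)) :=
      smul_le_smul h0 h1 hrp
    have c3 : le (SEA.seq (perp p) a) a := oplus_le_right hpa
    have hla : le (ConvexEA.smul lam r) a := le_trans' c1 (le_trans' hle2 c3)
    have h4 : SEA.seq r (ConvexEA.smul lam r) = ConvexEA.smul lam r := by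
      rw [seq_smul_rat r r hrat, sharp_seq_self hrS]
    have := seq_le_right r hla
    rwa [h4] at this
  have hxr : le (SEA.seq r a) r := seq_le_self r a
  have hra : SEA.seq r a = r := eq_of_approx harch hxr key
  have h5 := SEA.seq_oplus r a (perp a) one (perp_spec a)
  rw [hra, seq_one] at h5
  have h6 : SEA.seq r (perp a) = zero := oplus_cancel h5 (oplus_zero r)
  have h7 : SEA.seq (perp a) r = zero := SEA.seq_zero_symm r (perp a) h6
  have h8 : Commutes (perp a) r := h7.trans h6.symm
  have h9 := SEA.comm_perp (perp a) r h8
  have h10 := SEA.seq_oplus (perp a) r (perp r) one (perp_spec r)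
  rw [h7, seq_one] at h10
  have h11 : SEA.seq (perp a) (perp r) = perp a := by
    have := (zero_oplus (SEA.seq (perp a) (perp r))).symm.trans h10
    exact Option.some.inj this
  have h12 : le (perp a) (perp r) := by
    rw [← h11, h9]
    exact seq_le_self (perp r) (perp a)
  have hra' : le r a := le_of_perp_le_perp h12
  have hrf : le r f := hfloor.2.2 r hrS hra'
  exact le_trans' hbr hrf
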